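/- For all integers d ≥ 2 and q₁,…,q_d ≥ 2, the Diestel–Leader graph DL(q₁,…,q_d) is vertex-transitive: for any two vertices x and y there exists a graph automorphism g of DL(q₁,…,q_d) with g(x) = y. -/

import Mathlib

/-- A vertex of the homogeneous tree `T_q` with a fixed end: a pair `(f, n)` with
`f : ℤ → ℤ/qℤ` finitely supported and `f k = 0` for `k ≥ n`. -/
structure TreeVert (q : ℕ) where
  f : ℤ → ZMod q
  lvl : ℤ
  finsupp : {k : ℤ | f k ≠ 0}.Finite
  eventually_zero : ∀ k, lvl ≤ k → f k = 0

/-- Adjacency in the tree `T_q`. -/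
def treeAdj (q : ℕ) (u v : TreeVert q) : Prop :=
  (v.lvl = u.lvl + 1 ∧ ∀ k < u.lvl, u.f k = v.f k) ∨
  (u.lvl = v.lvl + 1 ∧ ∀ k < v.lvl, v.f k = u.f k)

/-- The homogeneous tree `T_q` with a fixed end, as a simple graph. -/
def treeGraph (q : ℕ) : SimpleGraph (TreeVert q) where
  Adj := treeAdj q
  symm := ⟨fun _ _ h => Or.symm h⟩
  loopless := by
    refine ⟨?_⟩
    rintro u (⟨h, _⟩ | ⟨h, _⟩) <;> omega

/-- Vertices of the Diestel-Leader graph `DL(q₁,…,q_d)`. -/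
def DLVert (d : ℕ) (q : Fin d → ℕ) : Type :=
  { x : (j : Fin d) → TreeVert (q j) // ∑ j, (x j).lvl = 0 }

/-- Adjacency in the Diestel-Leader graph. -/
def DLAdj (d : ℕ) (q : Fin d → ℕ) (x y : DLVert d q) : Prop :=
  ∃ i j : Fin d, i ≠ j ∧ treeAdj (q i) (x.1 i) (y.1 i) ∧ treeAdj (q j) (x.1 j) (y.1 j) ∧
    ∀ k, k ≠ i → k ≠ j → x.1 k = y.1 k

/-- The Diestel-Leader graph `DL(q₁,…,q_d)`. -/
def DLGraph (d : ℕ) (q : Fin d → ℕ) : SimpleGraph (DLVert d q) where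
  Adj := DLAdj d q
  symm := by
    refine ⟨?_⟩
    rintro x y ⟨i, j, hij, hi, hj, hk⟩
    exact ⟨i, j, hij, Or.symm hi, Or.symm hj, fun k h1 h2 => (hk k h1 h2).symm⟩
  loopless := by
    refine ⟨?_⟩
    rintro x ⟨i, j, hij, hi, _, _⟩
    rcases hi with ⟨h, _⟩ | ⟨h, _⟩ <;> omega

theorem TreeVert.ext' {u v : TreeVert q} (hf : u.f = v.f) (hl : u.lvl = v.lvl) : u = v := by
  cases u; cases v; simp_all

/-- Affine automorphism of the tree: shift levels by `t`, add correction `c`. -/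
def treeMap (q : ℕ) (t : ℤ) (c : ℤ → ZMod q) (hc : {k | c k ≠ 0}.Finite)
    (w : TreeVert q) : TreeVert q where
  f := fun k => if k < w.lvl + t then w.f (k - t) + c k else 0
  lvl := w.lvl + t
  finsupp := by
    apply Set.Finite.subset ((w.finsupp.image (fun k => k + t)).union hc)
    intro k hk
    simp only [Set.mem_setOf_eq] at hk
    by_contra hmem
    simp only [Set.mem_union, Set.mem_image, Set.mem_setOf_eq, not_or, not_exists,
      not_and, not_not] at hmem
    have h1 : w.f (k - t) = 0 := by
      by_contra h'
      exact absurd (by omega : k - t + t = k) (hmem.1 (k - t) h')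
    exact hk (by simp [h1, hmem.2])
  eventually_zero := fun k hk => if_neg (by omega)

lemma hc_neg {t : ℤ} {c : ℤ → ZMod q} (hc : {k | c k ≠ 0}.Finite) :
    {k | (fun k => -c (k + t)) k ≠ 0}.Finite := by
  apply Set.Finite.subset (hc.image (fun k => k - t))
  intro k hk
  simp only [Set.mem_setOf_eq, neg_ne_zero] at hk
  exact ⟨k + t, hk, by simp⟩

lemma treeMap_comp (t : ℤ) (c : ℤ → ZMod q) (hc : {k | c k ≠ 0}.Finite) (w : TreeVert q) :
    treeMap q (-t) (fun k => -c (k + t)) (hc_neg hc) (treeMap q t c hc w) = w := by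
  apply TreeVert.ext'
  · funext k
    simp only [treeMap]
    split_ifs with h1 h2
    · simp only [h1, ↓reduceIte]
      rw [if_pos (by omega)]
      have e2 : k - -t = k + t := by ring
      have e : k + t - t = k := by ring
      rw [e2, e]
      ring
    · simp only [h1, ↓reduceIte]
      exact (w.eventually_zero k (by omega)).symm
  · simp only [treeMap]; omega

lemma treeMap_comp' (t : ℤ) (c : ℤ → ZMod q) (hc : {k | c k ≠ 0}.Finite) (w : TreeVert q) :
    treeMap q t c hc (treeMap q (-t) (fun k => -c (k + t)) (hc_neg hc) w) = w := by
  apply TreeVert.ext'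
  · funext k
    simp only [treeMap]
    split_ifs with h1 h2
    · have e : k - t + t = k := by ring
      rw [e]
      ring
    · omega
    · exact (w.eventually_zero k (by omega)).symm
  · simp only [treeMap]; omega

lemma treeMap_adj {t : ℤ} {c : ℤ → ZMod q} {hc : {k | c k ≠ 0}.Finite} {u v : TreeVert q}
    (h : treeAdj q u v) :
    treeAdj q (treeMap q t c hc u) (treeMap q t c hc v) := by
  rcases h with ⟨hl, hf⟩ | ⟨hl, hf⟩
  · left
    refine ⟨by simp only [treeMap]; omega, fun k hk => ?_⟩
    simp only [treeMap] at hk ⊢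
    rw [if_pos hk, if_pos (by omega), hf (k - t) (by omega)]
  · right
    refine ⟨by simp only [treeMap]; omega, fun k hk => ?_⟩
    simp only [treeMap] at hk ⊢
    rw [if_pos hk, if_pos (by omega), hf (k - t) (by omega)]


section DL

variable {d : ℕ} {q : Fin d → ℕ}

/-- Coordinatewise affine map on DL vertices. -/
def dlMap (t : Fin d → ℤ) (c : ∀ j, ℤ → ZMod (q j))
    (hc : ∀ j, {k | c j k ≠ 0}.Finite) (hsum : ∑ j, t j = 0)
    (z : DLVert d q) : DLVert d q :=
  ⟨fun j => treeMap (q j) (t j) (c j) (hc j) (z.1 j), by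
    have : ∀ j, (treeMap (q j) (t j) (c j) (hc j) (z.1 j)).lvl = (z.1 j).lvl + t j :=
      fun j => rfl
    simp only [this, Finset.sum_add_distrib, z.2, hsum, add_zero]⟩

lemma dlMap_adj {t : Fin d → ℤ} {c : ∀ j, ℤ → ZMod (q j)}
    {hc : ∀ j, {k | c j k ≠ 0}.Finite} {hsum : ∑ j, t j = 0}
    {z z' : DLVert d q} (h : DLAdj d q z z') :
    DLAdj d q (dlMap t c hc hsum z) (dlMap t c hc hsum z') := by
  obtain ⟨i, j, hij, hi, hj, hk⟩ := h
  exact ⟨i, j, hij, treeMap_adj (hc := hc i) hi, treeMap_adj (hc := hc j) hj,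
    fun k h1 h2 => congrArg (treeMap (q k) (t k) (c k) (hc k)) (hk k h1 h2)⟩

end DL

/-- For all integers `d ≥ 2` and `q₁,…,q_d ≥ 2`, the Diestel–Leader graph
`DL(q₁,…,q_d)` is vertex-transitive. -/
theorem DLGraph_vertex_transitive (d : ℕ) (hd : 2 ≤ d) (q : Fin d → ℕ) (hq : ∀ j, 2 ≤ q j) :
    ∀ x y : DLVert d q, ∃ g : DLGraph d q ≃g DLGraph d q, g x = y := by
  intro x y
  set t : Fin d → ℤ := fun j => (y.1 j).lvl - (x.1 j).lvl with ht
  set c : ∀ j, ℤ → ZMod (q j) := fun j k => (y.1 j).f k - (x.1 j).f (k - t j) with hcdef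
  have hc : ∀ j, {k | c j k ≠ 0}.Finite := by
    intro j
    apply Set.Finite.subset ((y.1 j).finsupp.union ((x.1 j).finsupp.image (fun k => k + t j)))
    intro k hk
    simp only [Set.mem_setOf_eq, hcdef] at hk
    by_contra hmem
    simp only [Set.mem_union, Set.mem_image, Set.mem_setOf_eq, not_or, not_exists,
      not_and, not_not] at hmem
    have h1 : (x.1 j).f (k - t j) = 0 := by
      by_contra h'
      exact absurd (by omega : k - t j + t j = k) (hmem.2 (k - t j) h')
    exact hk (by simp [h1, hmem.1])
  have hsum : ∑ j, t j = 0 := by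
    simp only [ht, Finset.sum_sub_distrib, x.2, y.2, sub_zero]
  have hsum' : ∑ j, -(t j) = 0 := by
    simp only [Finset.sum_neg_distrib, hsum, neg_zero]
  set F : DLVert d q → DLVert d q := dlMap t c hc hsum with hF
  set Finv : DLVert d q → DLVert d q :=
    dlMap (fun j => -(t j)) (fun j k => -(c j (k + t j))) (fun j => hc_neg (hc j)) hsum'
    with hFinv
  have hleft : ∀ z, Finv (F z) = z := by
    intro z
    apply Subtype.ext
    funext j
    exact treeMap_comp (t j) (c j) (hc j) (z.1 j)
  have hright : ∀ z, F (Finv z) = z := by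
    intro z
    apply Subtype.ext
    funext j
    exact treeMap_comp' (t j) (c j) (hc j) (z.1 j)
  have hmap : ∀ z z', DLAdj d q z z' → DLAdj d q (F z) (F z') := fun _ _ h => dlMap_adj h
  have hmapinv : ∀ z z', DLAdj d q z z' → DLAdj d q (Finv z) (Finv z') :=
    fun _ _ h => dlMap_adj h
  refine ⟨⟨⟨F, Finv, hleft, hright⟩, ?_⟩, ?_⟩
  · intro a b
    constructor
    · intro h
      have h2 := hmapinv (F a) (F b) h
      rwa [hleft a, hleft b] at h2
    · exact hmap a b
  · show F x = y
    apply Subtype.ext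
    funext j
    apply TreeVert.ext'
    · funext k
      show (if k < (x.1 j).lvl + t j then (x.1 j).f (k - t j) + c j k else 0) = (y.1 j).f k
      have hlv : (x.1 j).lvl + t j = (y.1 j).lvl := by simp [ht]
      rw [hlv]
      split_ifs with h
      · simp [hcdef]
      · exact ((y.1 j).eventually_zero k (by omega)).symm
    · show (x.1 j).lvl + t j = (y.1 j).lvl
      simp [ht]
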